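/- Let φ ∈ C²(ℝᴺ) ∩ L¹(ℝᴺ) be positive, radially symmetric, nonincreasing in |x|, with |D²φ(x)| ≤ c|x|^{−2} φ(x), and let ℒ be the Lévy operator ℒφ(x) = P.V.∫(φ(x)−φ(z))𝒥(x−z)dz with 𝒥 a nonnegative radial Lévy kernel nonincreasing near infinity. Then ℒφ ∈ L^∞(ℝᴺ), and there exist R, C > 0 such that |ℒφ(x)| ≤ C (φ(x/2) + 𝒥(x/2)) for all |x| ≥ R. -/

import Mathlib

open MeasureTheory Set Filter

lemma aux_second_diff {E : Type*} [NormedAddCommGroup E] [NormedSpace ℝ E]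
    (f : E → ℝ) (hf : ContDiff ℝ 2 f) (x y : E) (K : ℝ)
    (hK : ∀ ξ ∈ Metric.closedBall x ‖y‖, ‖iteratedFDeriv ℝ 2 f ξ‖ ≤ K) :
    |f (x + y) + f (x - y) - 2 * f x| ≤ 2 * K * ‖y‖ ^ 2 := by
  set g := fderiv ℝ f with hg
  have hdiff : Differentiable ℝ f := hf.differentiable (by norm_num)
  have hgdiff : Differentiable ℝ g := (hf.fderiv_right (m := 1) (by norm_num)).differentiable (by norm_num)
  have hnorm : ∀ ξ, ‖fderiv ℝ g ξ‖ ≤ ‖iteratedFDeriv ℝ 2 f ξ‖ := by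
    intro ξ
    rw [← norm_iteratedFDeriv_fderiv (n := 1)]
    refine ContinuousLinearMap.opNorm_le_bound _ (norm_nonneg _) fun v => ?_
    have h2 := (iteratedFDeriv ℝ 1 (fderiv ℝ f) ξ).le_opNorm (fun _ => v)
    simpa [iteratedFDeriv_one_apply] using h2
  set s := Metric.closedBall x ‖y‖ with hs
  have hconv : Convex ℝ s := convex_closedBall x ‖y‖
  have hxs : x ∈ s := Metric.mem_closedBall_self (norm_nonneg y)
  have hxps : x + y ∈ s := by simp [hs, Metric.mem_closedBall, dist_eq_norm]
  have hxms : x - y ∈ s := by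
    simp only [hs, Metric.mem_closedBall, dist_eq_norm]
    simp [show x - y - x = -y by abel]
  have hglip : ∀ ξ ∈ s, ‖g ξ - g x‖ ≤ K * ‖y‖ := by
    intro ξ hξ
    have h1 : ‖g ξ - g x‖ ≤ K * ‖ξ - x‖ :=
      hconv.norm_image_sub_le_of_norm_fderiv_le (fun a _ => hgdiff a)
        (fun a ha => le_trans (hnorm a) (hK a ha)) hxs hξ
    have h2 : ‖ξ - x‖ ≤ ‖y‖ := by
      have := Metric.mem_closedBall.1 hξ
      simpa [dist_eq_norm] using this
    have hK0 : 0 ≤ K := le_trans (norm_nonneg _) (hK x hxs)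
    calc ‖g ξ - g x‖ ≤ K * ‖ξ - x‖ := h1
    _ ≤ K * ‖y‖ := by gcongr
  have hbound := fun (ξ : E) (hξ : ξ ∈ s) => hglip ξ hξ
  have b1 : ‖f (x + y) - f x - (g x) (x + y - x)‖ ≤ K * ‖y‖ * ‖x + y - x‖ :=
    hconv.norm_image_sub_le_of_norm_fderiv_le' (fun a _ => hdiff a) hbound hxs hxps
  have b2 : ‖f (x - y) - f x - (g x) (x - y - x)‖ ≤ K * ‖y‖ * ‖x - y - x‖ :=
    hconv.norm_image_sub_le_of_norm_fderiv_le' (fun a _ => hdiff a) hbound hxs hxms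
  have e1 : x + y - x = y := by abel
  have e2 : x - y - x = -y := by abel
  rw [e1] at b1
  rw [e2] at b2
  have hgy : (g x) (-y) = -(g x) y := map_neg _ _
  have : f (x + y) + f (x - y) - 2 * f x
      = (f (x + y) - f x - (g x) y) + (f (x - y) - f x - (g x) (-y)) := by
    rw [hgy]; ring
  rw [this]
  have hny : ‖(-y : E)‖ = ‖y‖ := norm_neg y
  calc |(f (x + y) - f x - (g x) y) + (f (x - y) - f x - (g x) (-y))|
      ≤ |f (x + y) - f x - (g x) y| + |f (x - y) - f x - (g x) (-y)| := abs_add_le _ _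
    _ ≤ K * ‖y‖ * ‖y‖ + K * ‖y‖ * ‖y‖ := by
        refine add_le_add ?_ ?_
        · exact b1
        · simpa [hny] using b2
    _ = 2 * K * ‖y‖ ^ 2 := by ring

set_option maxHeartbeats 2000000 in
theorem stmt9 (N : ℕ) (hN : 1 ≤ N) (c : ℝ)
    (J φ : EuclideanSpace ℝ (Fin N) → ℝ)
    (hJ0 : ∀ z, 0 ≤ J z)
    (hJrad : ∀ z w, ‖z‖ = ‖w‖ → J z = J w)
    (hJmono : ∃ R₀ > (0:ℝ), ∀ z w, R₀ ≤ ‖z‖ → ‖z‖ ≤ ‖w‖ → J w ≤ J z)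
    (hlevy : Integrable (fun z => min 1 (‖z‖ ^ 2) * J z))
    (hφsmooth : ContDiff ℝ 2 φ) (hφint : Integrable φ)
    (hφpos : ∀ x, 0 < φ x)
    (hφrad : ∀ x y, ‖x‖ ≤ ‖y‖ → φ y ≤ φ x)
    (hφhess : ∀ x, x ≠ 0 → ‖iteratedFDeriv ℝ 2 φ x‖ ≤ c * ‖x‖ ^ (-2:ℝ) * φ x)
    (Lφ : EuclideanSpace ℝ (Fin N) → ℝ)
    (hL : ∀ x, Tendsto (fun ε : ℝ =>
        ∫ z in {z | ε < ‖x - z‖}, (φ x - φ z) * J (x - z))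
      (nhdsWithin 0 (Ioi 0)) (nhds (Lφ x))) :
    (∃ M, ∀ x, |Lφ x| ≤ M) ∧
    ∃ R > (0:ℝ), ∃ C > (0:ℝ), ∀ x, R ≤ ‖x‖ →
      |Lφ x| ≤ C * (φ ((1/2 : ℝ) • x) + J ((1/2 : ℝ) • x)) := by
  haveI : NeZero N := ⟨by omega⟩
  obtain ⟨R₀, hR₀pos, hJmono⟩ := hJmono
  have hφcont : Continuous φ := hφsmooth.continuous
  have hφ0 : ∀ z : EuclideanSpace ℝ (Fin N), φ z ≤ φ 0 := fun z => hφrad 0 z (by simp)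
  -- J is a.e. strongly measurable
  have h0 : (volume : Measure (EuclideanSpace ℝ (Fin N))) {0} = 0 := measure_singleton _
  have hJm : AEStronglyMeasurable J (volume : Measure (EuclideanSpace ℝ (Fin N))) := by
    have hmc : Continuous fun y : EuclideanSpace ℝ (Fin N) => min 1 (‖y‖ ^ 2) :=
      continuous_const.min (continuous_norm.pow 2)
    have hae : ∀ᵐ y : EuclideanSpace ℝ (Fin N) ∂volume, y ≠ 0 := by
      rw [ae_iff]
      convert h0 using 2
      ext y; simp
    refine AEStronglyMeasurable.congr
      (hlevy.1.mul (hmc.measurable.inv.aestronglyMeasurable)) ?_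
    filter_upwards [hae] with y hy
    have hpos : (0:ℝ) < min 1 (‖y‖ ^ 2) :=
      lt_min one_pos (pow_pos (norm_pos_iff.2 hy) 2)
    show min 1 (‖y‖ ^ 2) * J y * (min 1 (‖y‖ ^ 2))⁻¹ = J y
    field_simp
  -- the Lévy integral
  set A := ∫ y : EuclideanSpace ℝ (Fin N), min 1 (‖y‖ ^ 2) * J y with hAdef
  have hlevy0 : ∀ y : EuclideanSpace ℝ (Fin N), 0 ≤ min 1 (‖y‖ ^ 2) * J y := fun y =>
    mul_nonneg (le_min zero_le_one (sq_nonneg _)) (hJ0 y)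
  have hA : 0 ≤ A := integral_nonneg hlevy0
  -- J is integrable away from the origin
  have hmeasB : ∀ a : ℝ, MeasurableSet {y : EuclideanSpace ℝ (Fin N) | a ≤ ‖y‖} :=
    fun a => (isClosed_le continuous_const continuous_norm).measurableSet
  have hJint : ∀ a : ℝ, 0 < a → IntegrableOn J {y : EuclideanSpace ℝ (Fin N) | a ≤ ‖y‖} := by
    intro a ha
    have hminpos : (0:ℝ) < min 1 (a ^ 2) := lt_min one_pos (pow_pos ha 2)
    refine Integrable.mono' ((hlevy.integrableOn).const_mul (min 1 (a ^ 2))⁻¹)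
      hJm.restrict ?_
    refine (ae_restrict_iff' (hmeasB a)).2 (ae_of_all _ fun y hy => ?_)
    have hy' : a ≤ ‖y‖ := hy
    have hmin : min 1 (a ^ 2) ≤ min 1 (‖y‖ ^ 2) := by
      refine min_le_min le_rfl ?_
      exact pow_le_pow_left₀ ha.le hy' 2
    have h2 : min 1 (a ^ 2) * J y ≤ min 1 (‖y‖ ^ 2) * J y :=
      mul_le_mul_of_nonneg_right hmin (hJ0 y)
    rw [Real.norm_eq_abs, abs_of_nonneg (hJ0 y)]
    calc J y = (min 1 (a ^ 2))⁻¹ * (min 1 (a ^ 2) * J y) := by field_simp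
    _ ≤ (min 1 (a ^ 2))⁻¹ * (min 1 (‖y‖ ^ 2) * J y) :=
      mul_le_mul_of_nonneg_left h2 (inv_nonneg.2 hminpos.le)
  -- bounded continuous multiples of J are integrable away from the origin
  have hmul : ∀ (g : EuclideanSpace ℝ (Fin N) → ℝ) (Cg : ℝ), Continuous g →
      (∀ y, |g y| ≤ Cg) → ∀ a : ℝ, 0 < a →
      IntegrableOn (fun y => g y * J y) {y : EuclideanSpace ℝ (Fin N) | a ≤ ‖y‖} := by
    intro g Cg hg hCg a ha
    refine Integrable.mono' ((hJint a ha).const_mul Cg)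
      ((hg.aestronglyMeasurable.mul hJm).restrict) ?_
    refine ae_of_all _ fun y => ?_
    rw [Real.norm_eq_abs, abs_mul, abs_of_nonneg (hJ0 y)]
    exact mul_le_mul_of_nonneg_right (hCg y) (hJ0 y)
  -- change of variables z = x - y
  have hcov : ∀ (x : EuclideanSpace ℝ (Fin N)) (ε : ℝ),
      (∫ z in {z : EuclideanSpace ℝ (Fin N) | ε < ‖x - z‖}, (φ x - φ z) * J (x - z))
        = ∫ y in {y : EuclideanSpace ℝ (Fin N) | ε < ‖y‖}, (φ x - φ (x - y)) * J y := by
    intro x ε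
    have hS : MeasurableSet {z : EuclideanSpace ℝ (Fin N) | ε < ‖x - z‖} :=
      (isOpen_lt continuous_const ((continuous_const.sub continuous_id).norm)).measurableSet
    have hT : MeasurableSet {y : EuclideanSpace ℝ (Fin N) | ε < ‖y‖} :=
      (isOpen_lt continuous_const continuous_norm).measurableSet
    rw [← integral_indicator hS, ← integral_indicator hT,
      ← integral_sub_left_eq_self
        (Set.indicator {z : EuclideanSpace ℝ (Fin N) | ε < ‖x - z‖}
          (fun z => (φ x - φ z) * J (x - z))) volume x]
    congr 1
    ext y
    by_cases h : ε < ‖y‖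
    · rw [Set.indicator_of_mem (by simpa [sub_sub_cancel] using h),
        Set.indicator_of_mem (by exact h)]
      simp [sub_sub_cancel]
    · rw [Set.indicator_of_notMem (by simpa [sub_sub_cancel] using h),
        Set.indicator_of_notMem (by exact h)]
  have hdbound : ∀ u v : EuclideanSpace ℝ (Fin N), |φ u - φ v| ≤ 2 * φ 0 := by
    intro u v
    rw [abs_sub_le_iff]
    constructor <;> nlinarith [hφ0 u, hφ0 v, hφpos u, hφpos v]
  -- main estimate for the truncated integrals
  have main : ∀ (x : EuclideanSpace ℝ (Fin N)) (Kx : ℝ), 0 ≤ Kx →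
      (∀ ξ ∈ Metric.closedBall x 1, ‖iteratedFDeriv ℝ 2 φ ξ‖ ≤ Kx) →
      ∀ ε : ℝ, ε ∈ Ioo (0:ℝ) 1 →
      |∫ z in {z : EuclideanSpace ℝ (Fin N) | ε < ‖x - z‖}, (φ x - φ z) * J (x - z)|
        ≤ Kx * A + ∫ y in {y : EuclideanSpace ℝ (Fin N) | 1 ≤ ‖y‖}, |φ x - φ (x - y)| * J y := by
    intro x Kx hKx0 hKx ε hε
    obtain ⟨hε0, hε1⟩ := hε
    set Aset := {y : EuclideanSpace ℝ (Fin N) | ε < ‖y‖} ∩ {y | ‖y‖ < 1} with hAset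
    set Bset := {y : EuclideanSpace ℝ (Fin N) | 1 ≤ ‖y‖} with hBset
    have hAmeas : MeasurableSet Aset :=
      ((isOpen_lt continuous_const continuous_norm).inter
        (isOpen_lt continuous_norm continuous_const)).measurableSet
    have hBmeas' : MeasurableSet Bset := hmeasB 1
    have hgm : Continuous fun y : EuclideanSpace ℝ (Fin N) => φ x - φ (x - y) :=
      continuous_const.sub (hφcont.comp (continuous_const.sub continuous_id))
    have hgp : Continuous fun y : EuclideanSpace ℝ (Fin N) => φ x - φ (x + y) :=
      continuous_const.sub (hφcont.comp (continuous_const.add continuous_id))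
    have hgmB : ∀ y : EuclideanSpace ℝ (Fin N), |φ x - φ (x - y)| ≤ 2 * φ 0 := by
      intro y
      rw [abs_sub_le_iff]
      constructor <;> nlinarith [hφ0 x, hφ0 (x - y), hφpos x, hφpos (x - y)]
    have hgpB : ∀ y : EuclideanSpace ℝ (Fin N), |φ x - φ (x + y)| ≤ 2 * φ 0 := by
      intro y
      rw [abs_sub_le_iff]
      constructor <;> nlinarith [hφ0 x, hφ0 (x + y), hφpos x, hφpos (x + y)]
    have hGε := hmul (fun y => φ x - φ (x - y)) (2 * φ 0) hgm hgmB ε hε0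
    have hGA : IntegrableOn (fun y => (φ x - φ (x - y)) * J y) Aset :=
      hGε.mono_set (fun y hy => (hy.1.le : ε ≤ ‖y‖))
    have hGB : IntegrableOn (fun y => (φ x - φ (x - y)) * J y) Bset :=
      (hmul (fun y => φ x - φ (x - y)) (2 * φ 0) hgm hgmB 1 one_pos)
    have hGpA : IntegrableOn (fun y => (φ x - φ (x + y)) * J y) Aset :=
      (hmul (fun y => φ x - φ (x + y)) (2 * φ 0) hgp hgpB ε hε0).mono_set
        (fun y hy => (hy.1.le : ε ≤ ‖y‖))
    have hunion : {y : EuclideanSpace ℝ (Fin N) | ε < ‖y‖} = Aset ∪ Bset := by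
      ext y
      simp only [hAset, hBset, Set.mem_setOf_eq, Set.mem_union, Set.mem_inter_iff]
      constructor
      · intro h
        rcases lt_or_ge ‖y‖ 1 with h1 | h1
        · exact Or.inl ⟨h, h1⟩
        · exact Or.inr h1
      · rintro (⟨h, _⟩ | h)
        · exact h
        · exact lt_of_lt_of_le hε1 h
    have hdisj : Disjoint Aset Bset := by
      rw [Set.disjoint_left]
      rintro y ⟨_, h1⟩ h2
      exact absurd (show (1:ℝ) ≤ ‖y‖ from h2) (not_le.2 h1)
    rw [hcov x ε, hunion, setIntegral_union hdisj hBmeas' hGA hGB]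
    -- symmetrization on Aset
    have hnegA : ∀ y : EuclideanSpace ℝ (Fin N), y ∈ Aset ↔ -y ∈ Aset := by
      intro y; simp [hAset, norm_neg]
    have hneg : ∫ y in Aset, (φ x - φ (x + y)) * J y
        = ∫ y in Aset, (φ x - φ (x - y)) * J y := by
      rw [← integral_indicator hAmeas, ← integral_indicator hAmeas,
        ← integral_neg_eq_self
          (Set.indicator Aset fun y => (φ x - φ (x + y)) * J y) volume]
      congr 1
      ext y
      by_cases h : y ∈ Aset
      · rw [Set.indicator_of_mem ((hnegA y).1 h), Set.indicator_of_mem h,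
          hJrad (-y) y (by simp)]
        simp [sub_eq_add_neg]
      · rw [Set.indicator_of_notMem (fun h' => h (by simpa using (hnegA (-y)).1 h')),
          Set.indicator_of_notMem h]
    have hsum : ∫ y in Aset, ((2 * φ x - φ (x - y) - φ (x + y)) * J y)
        = (∫ y in Aset, (φ x - φ (x - y)) * J y)
          + ∫ y in Aset, (φ x - φ (x + y)) * J y := by
      rw [← integral_add hGA hGpA]
      congr 1
      ext y
      ring
    have hhalf : ∫ y in Aset, (φ x - φ (x - y)) * J y
        = (1/2) * ∫ y in Aset, ((2 * φ x - φ (x - y) - φ (x + y)) * J y) := by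
      rw [hsum, hneg]; ring
    -- bound the A part
    have hHint : IntegrableOn
        (fun y => (2 * φ x - φ (x - y) - φ (x + y)) * J y) Aset := by
      have : (fun y : EuclideanSpace ℝ (Fin N) =>
          (2 * φ x - φ (x - y) - φ (x + y)) * J y)
          = fun y => ((φ x - φ (x - y)) * J y) + ((φ x - φ (x + y)) * J y) := by
        ext y; ring
      rw [this]
      exact hGA.add hGpA
    have hApart : |∫ y in Aset, (φ x - φ (x - y)) * J y| ≤ Kx * A := by
      rw [hhalf, abs_mul, abs_of_nonneg (by norm_num : (0:ℝ) ≤ 1/2)]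
      have h1 : |∫ y in Aset, ((2 * φ x - φ (x - y) - φ (x + y)) * J y)|
          ≤ ∫ y in Aset, ‖(2 * φ x - φ (x - y) - φ (x + y)) * J y‖ := by
        rw [← Real.norm_eq_abs]
        exact norm_integral_le_integral_norm _
      have h2 : ∫ y in Aset, ‖(2 * φ x - φ (x - y) - φ (x + y)) * J y‖
          ≤ ∫ y in Aset, 2 * Kx * (min 1 (‖y‖ ^ 2) * J y) := by
        refine setIntegral_mono_on hHint.norm
          ((hlevy.integrableOn).const_mul (2 * Kx)) hAmeas fun y hy => ?_
        have hy1 : ‖y‖ < 1 := hy.2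
        have hsec : |φ (x + y) + φ (x - y) - 2 * φ x| ≤ 2 * Kx * ‖y‖ ^ 2 := by
          refine aux_second_diff φ hφsmooth x y Kx fun ξ hξ => ?_
          refine hKx ξ (Metric.closedBall_subset_closedBall hy1.le hξ)
        have habs : |2 * φ x - φ (x - y) - φ (x + y)| ≤ 2 * Kx * ‖y‖ ^ 2 := by
          rw [show (2 * φ x - φ (x - y) - φ (x + y))
            = -(φ (x + y) + φ (x - y) - 2 * φ x) by ring, abs_neg]
          exact hsec
        have hmin : min 1 (‖y‖ ^ 2) = ‖y‖ ^ 2 :=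
          min_eq_right (by nlinarith [norm_nonneg y])
        rw [Real.norm_eq_abs, abs_mul, abs_of_nonneg (hJ0 y), hmin]
        calc |2 * φ x - φ (x - y) - φ (x + y)| * J y
            ≤ (2 * Kx * ‖y‖ ^ 2) * J y :=
              mul_le_mul_of_nonneg_right habs (hJ0 y)
          _ = 2 * Kx * (‖y‖ ^ 2 * J y) := by ring
      have h3 : ∫ y in Aset, 2 * Kx * (min 1 (‖y‖ ^ 2) * J y)
          ≤ 2 * Kx * A := by
        rw [hAdef, ← integral_const_mul]
        refine setIntegral_le_integral (hlevy.const_mul _) (ae_of_all _ fun y => ?_)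
        exact mul_nonneg (by positivity) (hlevy0 y)
      calc (1/2) * |∫ y in Aset, ((2 * φ x - φ (x - y) - φ (x + y)) * J y)|
          ≤ (1/2) * (2 * Kx * A) := by
            refine mul_le_mul_of_nonneg_left (le_trans h1 (le_trans h2 h3)) (by norm_num)
        _ = Kx * A := by ring
    -- bound the B part
    have hBpart : |∫ y in Bset, (φ x - φ (x - y)) * J y|
        ≤ ∫ y in Bset, |φ x - φ (x - y)| * J y := by
      rw [← Real.norm_eq_abs]
      refine le_trans (norm_integral_le_integral_norm _) (le_of_eq ?_)
      refine setIntegral_congr_fun hBmeas' fun y _ => ?_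
      rw [Real.norm_eq_abs, abs_mul, abs_of_nonneg (hJ0 y)]
    calc |(∫ y in Aset, (φ x - φ (x - y)) * J y)
          + ∫ y in Bset, (φ x - φ (x - y)) * J y|
        ≤ |∫ y in Aset, (φ x - φ (x - y)) * J y|
          + |∫ y in Bset, (φ x - φ (x - y)) * J y| := abs_add_le _ _
      _ ≤ Kx * A + ∫ y in Bset, |φ x - φ (x - y)| * J y :=
          add_le_add hApart hBpart
  -- global bound on the Hessian
  obtain ⟨K, hK0, hK⟩ : ∃ K : ℝ, 0 ≤ K ∧ ∀ ξ : EuclideanSpace ℝ (Fin N), ‖iteratedFDeriv ℝ 2 φ ξ‖ ≤ K := by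
    obtain ⟨K₀, hK₀⟩ := (isCompact_closedBall (0 : EuclideanSpace ℝ (Fin N)) 1).exists_bound_of_continuousOn
      ((hφsmooth.continuous_iteratedFDeriv (le_refl 2)).continuousOn)
    refine ⟨max K₀ (max c 0 * φ 0), le_trans (norm_nonneg _)
      (le_trans (hK₀ 0 (Metric.mem_closedBall_self one_pos.le)) (le_max_left _ _)), fun ξ => ?_⟩
    rcases le_or_gt ‖ξ‖ 1 with h1 | h1
    · exact le_trans (hK₀ ξ (by simpa [Metric.mem_closedBall, dist_eq_norm] using h1)) (le_max_left _ _)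
    · have hξ0 : ξ ≠ 0 := by
        intro h; rw [h, norm_zero] at h1; linarith
      refine le_trans (hφhess ξ hξ0) (le_trans ?_ (le_max_right _ _))
      have hr : ‖ξ‖ ^ (-2:ℝ) ≤ 1 :=
        Real.rpow_le_one_of_one_le_of_nonpos h1.le (by norm_num)
      have hr0 : (0:ℝ) ≤ ‖ξ‖ ^ (-2:ℝ) := Real.rpow_nonneg (norm_nonneg _) _
      rcases le_or_gt c 0 with hc | hc
      · have h2 : c * ‖ξ‖ ^ (-2:ℝ) * φ ξ ≤ 0 :=
          mul_nonpos_of_nonpos_of_nonneg (mul_nonpos_of_nonpos_of_nonneg hc hr0) (hφpos ξ).le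
        exact le_trans h2 (mul_nonneg (le_max_right c 0) (hφpos 0).le)
      · have hmax : max c 0 = c := max_eq_left hc.le
        rw [hmax]
        calc c * ‖ξ‖ ^ (-2:ℝ) * φ ξ ≤ c * 1 * φ ξ := by
              refine mul_le_mul_of_nonneg_right ?_ (hφpos ξ).le
              exact mul_le_mul_of_nonneg_left hr hc.le
        _ = c * φ ξ := by ring
        _ ≤ c * φ 0 := mul_le_mul_of_nonneg_left (hφ0 ξ) hc.le
  -- passing to the limit
  have hlim : ∀ (x : EuclideanSpace ℝ (Fin N)) (M : ℝ),
      (∀ ε : ℝ, ε ∈ Ioo (0:ℝ) 1 →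
        |∫ z in {z : EuclideanSpace ℝ (Fin N) | ε < ‖x - z‖}, (φ x - φ z) * J (x - z)| ≤ M) →
      |Lφ x| ≤ M := by
    intro x M hM
    have h1 : Tendsto (fun ε : ℝ =>
        |∫ z in {z : EuclideanSpace ℝ (Fin N) | ε < ‖x - z‖}, (φ x - φ z) * J (x - z)|)
        (nhdsWithin 0 (Ioi 0)) (nhds |Lφ x|) := (hL x).abs
    refine le_of_tendsto h1 ?_
    filter_upwards [Ioo_mem_nhdsGT_of_mem (by constructor <;> norm_num : (0:ℝ) ∈ Ico 0 1)] with ε hε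
    exact hM ε hε
  constructor
  · -- boundedness
    refine ⟨K * A + 2 * φ 0 * A, fun x => ?_⟩
    refine hlim x _ fun ε hε => ?_
    refine le_trans (main x K hK0 (fun ξ _ => hK ξ) ε hε) ?_
    refine add_le_add (le_refl (K * A)) ?_
    have habsint : IntegrableOn (fun y => |φ x - φ (x - y)| * J y)
        {y : EuclideanSpace ℝ (Fin N) | 1 ≤ ‖y‖} := by
      refine hmul (fun y => |φ x - φ (x - y)|) (2 * φ 0)
        ((continuous_const.sub (hφcont.comp (continuous_const.sub continuous_id))).abs)
        (fun y => by rw [abs_abs]; exact hdbound x (x - y)) 1 one_pos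
    have h1 : ∫ y in {y : EuclideanSpace ℝ (Fin N) | 1 ≤ ‖y‖}, |φ x - φ (x - y)| * J y
        ≤ ∫ y in {y : EuclideanSpace ℝ (Fin N) | 1 ≤ ‖y‖},
            2 * φ 0 * (min 1 (‖y‖ ^ 2) * J y) := by
      refine setIntegral_mono_on habsint ((hlevy.integrableOn).const_mul _)
        (hmeasB 1) fun y hy => ?_
      have hy1 : (1:ℝ) ≤ ‖y‖ := hy
      have hmin : min 1 (‖y‖ ^ 2) = 1 := min_eq_left (by nlinarith)
      rw [hmin]
      calc |φ x - φ (x - y)| * J y ≤ 2 * φ 0 * J y :=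
            mul_le_mul_of_nonneg_right (hdbound x (x - y)) (hJ0 y)
        _ = 2 * φ 0 * (1 * J y) := by ring
    have h2 : ∫ y in {y : EuclideanSpace ℝ (Fin N) | 1 ≤ ‖y‖},
        2 * φ 0 * (min 1 (‖y‖ ^ 2) * J y) ≤ 2 * φ 0 * A := by
      rw [hAdef, ← integral_const_mul]
      refine setIntegral_le_integral (hlevy.const_mul _) (ae_of_all _ fun y => ?_)
      exact mul_nonneg (by nlinarith [hφpos (0:EuclideanSpace ℝ (Fin N))]) (hlevy0 y)
    linarith
  · -- decay estimate
    set c' := max c 0 with hc'def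
    have hc'0 : (0:ℝ) ≤ c' := le_max_right c 0
    have hIφ : (0:ℝ) ≤ ∫ z, φ z := integral_nonneg fun z => (hφpos z).le
    refine ⟨max 4 (2 * R₀), lt_of_lt_of_le (by norm_num) (le_max_left _ _),
      c' * A + 3 * A + (∫ z, φ z) + 1, by nlinarith [mul_nonneg hc'0 hA], fun x hx => ?_⟩
    have h4 : (4:ℝ) ≤ ‖x‖ := le_trans (le_max_left _ _) hx
    have hR0 : 2 * R₀ ≤ ‖x‖ := le_trans (le_max_right _ _) hx
    have hhalfnorm : ‖(1/2 : ℝ) • x‖ = ‖x‖ / 2 := by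
      rw [norm_smul, Real.norm_eq_abs]
      rw [abs_of_nonneg (by norm_num : (0:ℝ) ≤ 1/2)]
      ring
    set φh := φ ((1/2 : ℝ) • x) with hφhdef
    set Jh := J ((1/2 : ℝ) • x) with hJhdef
    have hφh0 : 0 < φh := hφpos _
    have hJh0 : 0 ≤ Jh := hJ0 _
    have hφxh : φ x ≤ φh := hφrad _ x (by rw [hhalfnorm]; linarith)
    -- Hessian bound near x
    have hKx : ∀ ξ ∈ Metric.closedBall x 1, ‖iteratedFDeriv ℝ 2 φ ξ‖ ≤ c' * φh := by
      intro ξ hξ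
      have hdist : ‖x - ξ‖ ≤ 1 := by
        have := Metric.mem_closedBall.1 hξ
        rw [dist_comm] at this
        simpa [dist_eq_norm] using this
      have hξlow : ‖x‖ - 1 ≤ ‖ξ‖ := by
        have := norm_sub_norm_le x ξ
        linarith
      have hξ2 : (1:ℝ) ≤ ‖ξ‖ := by linarith
      have hξ0 : ξ ≠ 0 := by
        intro h; rw [h, norm_zero] at hξ2; linarith
      have hr : ‖ξ‖ ^ (-2:ℝ) ≤ 1 :=
        Real.rpow_le_one_of_one_le_of_nonpos hξ2 (by norm_num)
      have hr0 : (0:ℝ) ≤ ‖ξ‖ ^ (-2:ℝ) := Real.rpow_nonneg (norm_nonneg _) _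
      have hφξ : φ ξ ≤ φh := hφrad _ ξ (by rw [hhalfnorm]; linarith)
      refine le_trans (hφhess ξ hξ0) ?_
      rcases le_or_gt c 0 with hc | hc
      · have h2 : c * ‖ξ‖ ^ (-2:ℝ) * φ ξ ≤ 0 :=
          mul_nonpos_of_nonpos_of_nonneg (mul_nonpos_of_nonpos_of_nonneg hc hr0) (hφpos ξ).le
        exact le_trans h2 (mul_nonneg hc'0 hφh0.le)
      · have hmax : c' = c := max_eq_left hc.le
        rw [hmax]
        calc c * ‖ξ‖ ^ (-2:ℝ) * φ ξ ≤ c * 1 * φ ξ :=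
              mul_le_mul_of_nonneg_right (mul_le_mul_of_nonneg_left hr hc.le) (hφpos ξ).le
          _ = c * φ ξ := by ring
          _ ≤ c * φh := mul_le_mul_of_nonneg_left hφξ hc.le
    refine hlim x _ fun ε hε => ?_
    refine le_trans (main x (c' * φh) (mul_nonneg hc'0 hφh0.le) hKx ε hε) ?_
    -- split the tail at ‖x‖/2
    set B1 := {y : EuclideanSpace ℝ (Fin N) | 1 ≤ ‖y‖} ∩ {y | ‖y‖ < ‖x‖ / 2} with hB1
    set B2 := {y : EuclideanSpace ℝ (Fin N) | ‖x‖ / 2 ≤ ‖y‖} with hB2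
    have hB2meas : MeasurableSet B2 := hmeasB _
    have habsint : IntegrableOn (fun y => |φ x - φ (x - y)| * J y)
        {y : EuclideanSpace ℝ (Fin N) | 1 ≤ ‖y‖} := by
      refine hmul (fun y => |φ x - φ (x - y)|) (2 * φ 0)
        ((continuous_const.sub (hφcont.comp (continuous_const.sub continuous_id))).abs)
        (fun y => by rw [abs_abs]; exact hdbound x (x - y)) 1 one_pos
    have hB1int : IntegrableOn (fun y => |φ x - φ (x - y)| * J y) B1 :=
      habsint.mono_set (fun y hy => hy.1)
    have hB2sub : B2 ⊆ {y : EuclideanSpace ℝ (Fin N) | 1 ≤ ‖y‖} := by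
      intro y hy
      have : ‖x‖ / 2 ≤ ‖y‖ := hy
      show (1:ℝ) ≤ ‖y‖
      linarith
    have hB2int : IntegrableOn (fun y => |φ x - φ (x - y)| * J y) B2 :=
      habsint.mono_set hB2sub
    have hunion2 : {y : EuclideanSpace ℝ (Fin N) | 1 ≤ ‖y‖} = B1 ∪ B2 := by
      ext y
      simp only [hB1, hB2, Set.mem_setOf_eq, Set.mem_union, Set.mem_inter_iff]
      constructor
      · intro h
        rcases lt_or_ge ‖y‖ (‖x‖ / 2) with h1 | h1
        · exact Or.inl ⟨h, h1⟩
        · exact Or.inr h1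
      · rintro (⟨h, _⟩ | h)
        · exact h
        · linarith
    have hdisj2 : Disjoint B1 B2 := by
      rw [Set.disjoint_left]
      rintro y ⟨_, h1⟩ h2
      exact absurd (show ‖x‖ / 2 ≤ ‖y‖ from h2) (not_le.2 h1)
    rw [hunion2, setIntegral_union hdisj2 hB2meas hB1int hB2int]
    -- B1 bound
    have hB1bound : ∫ y in B1, |φ x - φ (x - y)| * J y ≤ 2 * φh * A := by
      have h1 : ∫ y in B1, |φ x - φ (x - y)| * J y
          ≤ ∫ y in B1, 2 * φh * (min 1 (‖y‖ ^ 2) * J y) := by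
        refine setIntegral_mono_on hB1int ((hlevy.integrableOn).const_mul _)
          (((isClosed_le continuous_const continuous_norm).measurableSet).inter
            (isOpen_lt continuous_norm continuous_const).measurableSet) fun y hy => ?_
        obtain ⟨hy1, hy2⟩ := hy
        have hy1' : (1:ℝ) ≤ ‖y‖ := hy1
        have hy2' : ‖y‖ < ‖x‖ / 2 := hy2
        have hmin : min 1 (‖y‖ ^ 2) = 1 := min_eq_left (by nlinarith)
        have hφxy : φ (x - y) ≤ φh := by
          refine hφrad _ (x - y) ?_
          rw [hhalfnorm]
          have := norm_sub_norm_le x y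
          linarith
        have habs : |φ x - φ (x - y)| ≤ 2 * φh := by
          rw [abs_sub_le_iff]
          constructor <;> nlinarith [hφpos x, hφpos (x - y)]
        rw [hmin]
        calc |φ x - φ (x - y)| * J y ≤ 2 * φh * J y :=
              mul_le_mul_of_nonneg_right habs (hJ0 y)
          _ = 2 * φh * (1 * J y) := by ring
      have h2 : ∫ y in B1, 2 * φh * (min 1 (‖y‖ ^ 2) * J y) ≤ 2 * φh * A := by
        rw [hAdef, ← integral_const_mul]
        refine setIntegral_le_integral (hlevy.const_mul _) (ae_of_all _ fun y => ?_)
        exact mul_nonneg (by nlinarith) (hlevy0 y)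
      linarith
    -- B2 bound
    have hB2bound : ∫ y in B2, |φ x - φ (x - y)| * J y
        ≤ φh * A + Jh * ∫ z, φ z := by
      have hint2 : IntegrableOn (fun y =>
          φh * (min 1 (‖y‖ ^ 2) * J y) + Jh * φ (x - y)) B2 := by
        refine Integrable.add ((hlevy.integrableOn).const_mul _) ?_
        exact ((hφint.comp_sub_left x).const_mul _).integrableOn
      have h1 : ∫ y in B2, |φ x - φ (x - y)| * J y
          ≤ ∫ y in B2, (φh * (min 1 (‖y‖ ^ 2) * J y) + Jh * φ (x - y)) := by
        refine setIntegral_mono_on hB2int hint2 hB2meas fun y hy => ?_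
        have hy' : ‖x‖ / 2 ≤ ‖y‖ := hy
        have hy1 : (1:ℝ) ≤ ‖y‖ := by linarith
        have hmin : min 1 (‖y‖ ^ 2) = 1 := min_eq_left (by nlinarith)
        have hJy : J y ≤ Jh := by
          refine hJmono ((1/2 : ℝ) • x) y ?_ ?_
          · rw [hhalfnorm]; linarith
          · rw [hhalfnorm]; linarith
        have habs : |φ x - φ (x - y)| * J y ≤ (φ x + φ (x - y)) * J y := by
          refine mul_le_mul_of_nonneg_right ?_ (hJ0 y)
          rw [abs_sub_le_iff]
          constructor <;> nlinarith [hφpos x, hφpos (x - y)]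
        refine le_trans habs ?_
        rw [hmin]
        have e1 : (φ x + φ (x - y)) * J y = φ x * J y + φ (x - y) * J y := by ring
        rw [e1]
        refine add_le_add ?_ ?_
        · have : φ x * J y ≤ φh * J y :=
            mul_le_mul_of_nonneg_right hφxh (hJ0 y)
          calc φ x * J y ≤ φh * J y := this
            _ = φh * (1 * J y) := by ring
        · calc φ (x - y) * J y ≤ φ (x - y) * Jh :=
              mul_le_mul_of_nonneg_left hJy (hφpos (x - y)).le
            _ = Jh * φ (x - y) := by ring
      have h2 : ∫ y in B2, (φh * (min 1 (‖y‖ ^ 2) * J y) + Jh * φ (x - y))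
          = (∫ y in B2, φh * (min 1 (‖y‖ ^ 2) * J y))
            + ∫ y in B2, Jh * φ (x - y) := by
        refine integral_add ((hlevy.integrableOn).const_mul _) ?_
        exact ((hφint.comp_sub_left x).const_mul _).integrableOn
      have h3 : ∫ y in B2, φh * (min 1 (‖y‖ ^ 2) * J y) ≤ φh * A := by
        rw [hAdef, ← integral_const_mul]
        refine setIntegral_le_integral (hlevy.const_mul _) (ae_of_all _ fun y => ?_)
        exact mul_nonneg hφh0.le (hlevy0 y)
      have h4' : ∫ y in B2, Jh * φ (x - y) ≤ Jh * ∫ z, φ z := by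
        have e2 : Jh * ∫ z, φ z = ∫ y, Jh * φ (x - y) := by
          rw [show (∫ z, φ z) = ∫ y, φ (x - y) from
            (integral_sub_left_eq_self (fun z => φ z) volume x).symm,
            ← integral_const_mul]
        rw [e2]
        refine setIntegral_le_integral ?_ (ae_of_all _ fun y => ?_)
        · exact (hφint.comp_sub_left x).const_mul _
        · exact mul_nonneg hJh0 (hφpos (x - y)).le
      linarith
    -- assemble
    have key : (c' * A + 3 * A + (∫ z, φ z) + 1) * (φh + Jh)
        - ((c' * φh) * A + (2 * φh * A + (φh * A + Jh * ∫ z, φ z)))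
        = ((∫ z, φ z) + 1) * φh + (c' * A + 3 * A + 1) * Jh := by ring
    have e1 : 0 ≤ ((∫ z, φ z) + 1) * φh :=
      mul_nonneg (by linarith) hφh0.le
    have e2 : 0 ≤ (c' * A + 3 * A + 1) * Jh :=
      mul_nonneg (by nlinarith [mul_nonneg hc'0 hA]) hJh0
    linarith
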